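/- For a T0 space X, the following conditions are equivalent: (1) X is well-filtered; (2) every Rudin set of X is the closure of a singleton; (3) every well-filtered determined (WD) set of X is the closure of a (unique) singleton. -/

import Mathlib

open Set Topology

universe u

variable {X : Type u}

/-- Specialization order: `x ≤ y` iff `x ∈ closure {y}`. -/
def specLE [TopologicalSpace X] (x y : X) : Prop := x ∈ closure ({y} : Set X)

/-- Directed subset w.r.t. the specialization order. -/
def dirOn [TopologicalSpace X] (D : Set X) : Prop :=
  D.Nonempty ∧ ∀ a ∈ D, ∀ b ∈ D, ∃ c ∈ D, specLE a c ∧ specLE b c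

/-- Downward closure w.r.t. the specialization order. -/
def dClo [TopologicalSpace X] (A : Set X) : Set X := {x | ∃ a ∈ A, specLE x a}

/-- Upward closure w.r.t. the specialization order. -/
def uClo [TopologicalSpace X] (A : Set X) : Set X := {x | ∃ a ∈ A, specLE a x}

/-- `x` is a supremum of `D` w.r.t. the specialization order. -/
def IsSupOf [TopologicalSpace X] (D : Set X) (x : X) : Prop :=
  (∀ d ∈ D, specLE d x) ∧ ∀ y, (∀ d ∈ D, specLE d y) → specLE x y

/-- A d-space: a T0 space in which every directed set (for the specialization order)
has a supremum, and every open set is inaccessible by directed suprema. -/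
def IsDSpace (X : Type u) [TopologicalSpace X] : Prop :=
  T0Space X ∧ (∀ D : Set X, dirOn D → ∃ x, IsSupOf D x) ∧
    ∀ D : Set X, dirOn D → ∀ x, IsSupOf D x →
      ∀ U : Set X, IsOpen U → x ∈ U → (D ∩ U).Nonempty

/-- A set is saturated if it is the intersection of the open sets containing it. -/
def IsSat [TopologicalSpace X] (A : Set X) : Prop :=
  A = ⋂₀ {U : Set X | IsOpen U ∧ A ⊆ U}

/-- The collection of nonempty compact saturated subsets. -/
def KSet (X : Type u) [TopologicalSpace X] : Set (Set X) :=
  {K | K.Nonempty ∧ IsCompact K ∧ IsSat K}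

/-- A filtered family of sets: nonempty, and every two members contain a common member. -/
def FiltFam [TopologicalSpace X] (𝒦 : Set (Set X)) : Prop :=
  𝒦.Nonempty ∧ ∀ K₁ ∈ 𝒦, ∀ K₂ ∈ 𝒦, ∃ K₃ ∈ 𝒦, K₃ ⊆ K₁ ∧ K₃ ⊆ K₂

/-- Well-filtered space. -/
def IsWF (X : Type u) [TopologicalSpace X] : Prop :=
  T0Space X ∧ ∀ 𝒦 : Set (Set X), 𝒦 ⊆ KSet X → FiltFam 𝒦 →
    ∀ U : Set X, IsOpen U → ⋂₀ 𝒦 ⊆ U → ∃ K ∈ 𝒦, K ⊆ U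

/-- Sober space: every irreducible closed subset is the closure of a unique point. -/
def IsSober (X : Type u) [TopologicalSpace X] : Prop :=
  ∀ A : Set X, IsIrreducible A → IsClosed A → ∃! x : X, A = closure {x}

/-- `V` is way below `U` in the lattice of open sets: every open cover of `U`
has a finite subfamily covering `V`. -/
def wayBelow [TopologicalSpace X] (V U : Set X) : Prop :=
  ∀ 𝒞 : Set (Set X), (∀ W ∈ 𝒞, IsOpen W) → U ⊆ ⋃₀ 𝒞 →
    ∃ 𝒟 ⊆ 𝒞, 𝒟.Finite ∧ V ⊆ ⋃₀ 𝒟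

/-- Core compact space. -/
def CoreCompact (X : Type u) [TopologicalSpace X] : Prop :=
  ∀ (x : X) (U : Set X), IsOpen U → x ∈ U →
    ∃ V : Set X, IsOpen V ∧ x ∈ V ∧ wayBelow V U

/-- The underlying type of the Smyth power space: nonempty compact saturated subsets. -/
abbrev KS (X : Type u) [TopologicalSpace X] : Type u :=
  {K : Set X // K.Nonempty ∧ IsCompact K ∧ IsSat K}

/-- The upper Vietoris topology on `KS X`, generated by the sets
`□U = {K | K ⊆ U}` for `U` open; this makes `KS X` the Smyth power space `P_S(X)`. -/
instance (X : Type u) [TopologicalSpace X] : TopologicalSpace (KS X) :=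
  TopologicalSpace.generateFrom
    {S | ∃ U : Set X, IsOpen U ∧ S = {K : KS X | (K : Set X) ⊆ U}}

/-- Rudin set: a nonempty closed set that is a minimal closed set meeting all
members of some filtered family of nonempty compact saturated sets. -/
def RudinSet [TopologicalSpace X] (A : Set X) : Prop :=
  IsClosed A ∧ A.Nonempty ∧ ∃ 𝒦 : Set (Set X), 𝒦 ⊆ KSet X ∧ FiltFam 𝒦 ∧
    (∀ K ∈ 𝒦, (K ∩ A).Nonempty) ∧
    ∀ B : Set X, IsClosed B → B ⊆ A → (∀ K ∈ 𝒦, (K ∩ B).Nonempty) → B = A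

/-- Well-filtered determined (WD) set. -/
def IsWDSet [TopologicalSpace X] (A : Set X) : Prop :=
  IsClosed A ∧ A.Nonempty ∧ ∀ (Y : Type u) [TopologicalSpace Y], IsWF Y →
    ∀ f : X → Y, Continuous f → ∃ y : Y, closure (f '' A) = closure {y}

/-- Rudin space: every irreducible closed set is a Rudin set. -/
def RudinSpace (X : Type u) [TopologicalSpace X] : Prop :=
  ∀ A : Set X, IsClosed A → IsIrreducible A → RudinSet A

/-- WD space: every irreducible closed set is a WD set. -/
def WDSpace (X : Type u) [TopologicalSpace X] : Prop :=
  ∀ A : Set X, IsClosed A → IsIrreducible A → IsWDSet A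

/-- DC space: every irreducible closed set is the closure of a directed set. -/
def DCSpace (X : Type u) [TopologicalSpace X] : Prop :=
  ∀ A : Set X, IsClosed A → IsIrreducible A → ∃ D : Set X, dirOn D ∧ A = closure D

section Aux

variable [TopologicalSpace X]

lemma specLE_refl (x : X) : specLE x x := subset_closure rfl

lemma specLE_trans {x y z : X} (h1 : specLE x y) (h2 : specLE y z) : specLE x z := by
  have : closure ({y} : Set X) ⊆ closure ({z} : Set X) :=
    closure_minimal (Set.singleton_subset_iff.2 h2) isClosed_closure
  exact this h1

/-- Key fact: opens are upper sets w.r.t. specLE. -/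
lemma mem_of_specLE_of_open {U : Set X} (hU : IsOpen U) {s x : X}
    (hs : s ∈ U) (h : specLE s x) : x ∈ U := by
  rcases mem_closure_iff.1 h U hU hs with ⟨t, htU, ht⟩
  rcases ht with rfl
  exact htU

lemma subset_uClo (S : Set X) : S ⊆ uClo S := fun s hs => ⟨s, hs, specLE_refl s⟩

lemma uClo_mono {S T : Set X} (h : S ⊆ T) : uClo S ⊆ uClo T :=
  fun x ⟨s, hs, hsx⟩ => ⟨s, h hs, hsx⟩

lemma isSat_uClo (S : Set X) : IsSat (uClo S) := by
  apply Set.Subset.antisymm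
  · exact fun x hx => fun U ⟨hUo, hSU⟩ => hSU hx
  · intro x hx
    by_contra hxn
    have hsub : uClo S ⊆ (closure ({x} : Set X))ᶜ := by
      intro y ⟨s, hs, hsy⟩ hy
      exact hxn ⟨s, hs, specLE_trans hsy hy⟩
    have := hx ((closure ({x} : Set X))ᶜ) ⟨isClosed_closure.isOpen_compl, hsub⟩
    exact this (subset_closure rfl)

lemma isCompact_uClo {S : Set X} (hS : IsCompact S) : IsCompact (uClo S) := by
  rw [isCompact_iff_finite_subcover]
  intro ι U hUo hcov
  rcases hS.elim_finite_subcover U hUo ((subset_uClo S).trans hcov) with ⟨t, ht⟩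
  refine ⟨t, ?_⟩
  rintro x ⟨s, hs, hsx⟩
  rcases Set.mem_iUnion₂.1 (ht hs) with ⟨i, hi, hsUi⟩
  exact Set.mem_iUnion₂.2 ⟨i, hi, mem_of_specLE_of_open (hUo i) hsUi hsx⟩

lemma uClo_mem_KSet {S : Set X} (hne : S.Nonempty) (hS : IsCompact S) :
    uClo S ∈ KSet X :=
  ⟨hne.mono (subset_uClo S), isCompact_uClo hS, isSat_uClo S⟩

lemma sat_upper {K : Set X} (hK : IsSat K) {k x : X} (hk : k ∈ K) (h : specLE k x) :
    x ∈ K := by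
  rw [hK]
  exact fun U ⟨hUo, hKU⟩ => mem_of_specLE_of_open hUo (hKU hk) h

/-- A closed set meeting the upward closure of `S` meets `S`. -/
lemma closed_inter_uClo {B S : Set X} (hB : IsClosed B)
    (h : (uClo S ∩ B).Nonempty) : (S ∩ B).Nonempty := by
  rcases h with ⟨x, ⟨s, hs, hsx⟩, hxB⟩
  have : closure ({x} : Set X) ⊆ B := closure_minimal (Set.singleton_subset_iff.2 hxB) hB
  exact ⟨s, hs, this hsx⟩

/-- In a well-filtered space, every Rudin set is a point closure. -/
lemma rudin_of_wf {Y : Type u} [TopologicalSpace Y] (hwf : IsWF Y) {A : Set Y}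
    (hA : RudinSet A) : ∃ y : Y, A = closure {y} := by
  obtain ⟨hAc, hAne, 𝒦, h𝒦K, h𝒦F, h𝒦A, hmin⟩ := hA
  set ℱ : Set (Set Y) := (fun K => uClo (K ∩ A)) '' 𝒦 with hℱ
  have hℱK : ℱ ⊆ KSet Y := by
    rintro _ ⟨K, hK, rfl⟩
    exact uClo_mem_KSet (h𝒦A K hK) ((h𝒦K hK).2.1.inter_right hAc)
  have hℱF : FiltFam ℱ := by
    refine ⟨h𝒦F.1.image _, ?_⟩
    rintro _ ⟨K₁, hK₁, rfl⟩ _ ⟨K₂, hK₂, rfl⟩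
    rcases h𝒦F.2 K₁ hK₁ K₂ hK₂ with ⟨K₃, hK₃, h31, h32⟩
    exact ⟨uClo (K₃ ∩ A), ⟨K₃, hK₃, rfl⟩,
      uClo_mono (Set.inter_subset_inter_left _ h31),
      uClo_mono (Set.inter_subset_inter_left _ h32)⟩
  have hnot : ¬ (⋂₀ ℱ ⊆ Aᶜ) := by
    intro hsub
    rcases hwf.2 ℱ hℱK hℱF Aᶜ hAc.isOpen_compl hsub with ⟨F, hF, hFU⟩
    rcases hF with ⟨K, hK, rfl⟩
    rcases h𝒦A K hK with ⟨s, hsK, hsA⟩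
    exact hFU (subset_uClo _ ⟨hsK, hsA⟩) hsA
  rcases Set.not_subset.1 hnot with ⟨x, hxI, hxA⟩
  have hxA : x ∈ A := not_not.1 hxA
  refine ⟨x, (hmin (closure {x}) isClosed_closure
    (closure_minimal (Set.singleton_subset_iff.2 hxA) hAc) ?_).symm⟩
  intro K hK
  have hxu : x ∈ uClo (K ∩ A) := hxI _ ⟨K, hK, rfl⟩
  rcases hxu with ⟨s, hs, hsx⟩
  exact ⟨s, hs.1, hsx⟩

/-- Every Rudin set is a WD set. -/
lemma rudin_isWD {A : Set X} (hA : RudinSet A) : IsWDSet A := by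
  obtain ⟨hAc, hAne, 𝒦, h𝒦K, h𝒦F, h𝒦A, hmin⟩ := hA
  refine ⟨hAc, hAne, ?_⟩
  intro Y _ hwf f hf
  set A' : Set Y := closure (f '' A) with hA'
  have hA'c : IsClosed A' := isClosed_closure
  have hA'ne : A'.Nonempty := (hAne.image f).mono subset_closure
  set ℱ : Set (Set Y) := (fun K => uClo (f '' (K ∩ A))) '' 𝒦 with hℱ
  have hRud : RudinSet A' := by
    refine ⟨hA'c, hA'ne, ℱ, ?_, ?_, ?_, ?_⟩
    · rintro _ ⟨K, hK, rfl⟩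
      exact uClo_mem_KSet ((h𝒦A K hK).image f)
        (((h𝒦K hK).2.1.inter_right hAc).image hf)
    · refine ⟨h𝒦F.1.image _, ?_⟩
      rintro _ ⟨K₁, hK₁, rfl⟩ _ ⟨K₂, hK₂, rfl⟩
      rcases h𝒦F.2 K₁ hK₁ K₂ hK₂ with ⟨K₃, hK₃, h31, h32⟩
      exact ⟨uClo (f '' (K₃ ∩ A)), ⟨K₃, hK₃, rfl⟩,
        uClo_mono (Set.image_mono (Set.inter_subset_inter_left _ h31)),
        uClo_mono (Set.image_mono (Set.inter_subset_inter_left _ h32))⟩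
    · rintro _ ⟨K, hK, rfl⟩
      rcases h𝒦A K hK with ⟨s, hsK, hsA⟩
      exact ⟨f s, subset_uClo _ ⟨s, ⟨hsK, hsA⟩, rfl⟩,
        subset_closure ⟨s, hsA, rfl⟩⟩
    · intro B hBc hBA' hBmeet
      have hCA : f ⁻¹' B ∩ A = A := by
        apply hmin
        · exact (hBc.preimage hf).inter hAc
        · exact Set.inter_subset_right
        · intro K hK
          have := closed_inter_uClo hBc (hBmeet _ ⟨K, hK, rfl⟩)
          rcases this with ⟨_, ⟨k, hkKA, rfl⟩, hfkB⟩
          exact ⟨k, hkKA.1, hfkB, hkKA.2⟩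
      have : A ⊆ f ⁻¹' B := by rw [← hCA]; exact Set.inter_subset_left
      exact Set.Subset.antisymm hBA'
        (closure_minimal (Set.image_subset_iff.2 this) hBc)
  exact rudin_of_wf hwf hRud

/-- Compactness + chain FIP: a chain of closed sets each meeting a compact set
has intersection meeting the compact set. -/
lemma chain_inter_compact {K : Set X} (hK : IsCompact K) (hKne : K.Nonempty)
    (c : Set (Set X)) (hc : IsChain (· ⊆ ·) c) (hcne : c.Nonempty)
    (hcl : ∀ C ∈ c, IsClosed C) (hmeet : ∀ C ∈ c, (K ∩ C).Nonempty) :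
    (K ∩ ⋂₀ c).Nonempty := by
  rw [Set.nonempty_iff_ne_empty]
  intro hempty
  have : Nonempty c := hcne.to_subtype
  have hdir : Directed (· ⊇ ·) (fun C : c => (C : Set X)) := by
    intro C₁ C₂
    rcases hc.total C₁.2 C₂.2 with h | h
    · exact ⟨C₁, le_refl _, h⟩
    · exact ⟨C₂, h, le_refl _⟩
  have hempty' : (K ∩ ⋂ C : c, (C : Set X)) = ∅ := by
    rw [Set.sInter_eq_iInter] at hempty; exact hempty
  rcases hK.elim_directed_family_closed _ (fun C : c => hcl C.1 C.2) hempty' hdir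
    with ⟨C, hC⟩
  exact (hmeet C.1 C.2).ne_empty hC

end Aux

/-- a T0 space is well-filtered iff every Rudin set is the closure of a
point iff every WD set is the closure of a unique point. -/
theorem stmt8 {X : Type u} [TopologicalSpace X] [T0Space X] :
    List.TFAE [IsWF X,
      ∀ A : Set X, RudinSet A → ∃ x : X, A = closure {x},
      ∀ A : Set X, IsWDSet A → ∃! x : X, A = closure {x}] := by
  tfae_have 1 → 3 := by
    intro h1 A hA
    rcases hA.2.2 X h1 id continuous_id with ⟨y, hy⟩
    rw [Set.image_id, hA.1.closure_eq] at hy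
    refine ⟨y, hy, ?_⟩
    intro z hz
    have : closure ({z} : Set X) = closure ({y} : Set X) := by rw [← hz, ← hy]
    have h1 : y ⤳ z := specializes_iff_mem_closure.2 (this ▸ subset_closure rfl)
    have h2 : z ⤳ y :=
      specializes_iff_mem_closure.2 (this ▸ subset_closure rfl : y ∈ closure {z})
    exact (h2.antisymm h1).eq
  tfae_have 3 → 2 := by
    intro h3 A hA
    rcases h3 A (rudin_isWD hA) with ⟨x, hx, _⟩
    exact ⟨x, hx⟩
  tfae_have 2 → 1 := by
    intro h2
    refine ⟨inferInstance, ?_⟩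
    intro 𝒦 h𝒦K h𝒦F U hU hIU
    by_contra hnone
    push_neg at hnone
    set S : Set (Set X) := {C | IsClosed C ∧ C ⊆ Uᶜ ∧ ∀ K ∈ 𝒦, (K ∩ C).Nonempty} with hS
    have hUc : Uᶜ ∈ S := by
      refine ⟨hU.isClosed_compl, Set.Subset.rfl, ?_⟩
      intro K hK
      rcases Set.not_subset.1 (hnone K hK) with ⟨k, hkK, hkU⟩
      exact ⟨k, hkK, hkU⟩
    have hzorn : ∃ m, m ⊆ Uᶜ ∧ Minimal (· ∈ S) m := by
      apply zorn_superset_nonempty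
      · intro c hcS hc hcne
        refine ⟨⋂₀ c, ⟨isClosed_sInter fun C hC => (hcS hC).1, ?_, ?_⟩,
          fun s hs => Set.sInter_subset_of_mem hs⟩
        · rcases hcne with ⟨C₀, hC₀⟩
          exact (Set.sInter_subset_of_mem hC₀).trans (hcS hC₀).2.1
        · intro K hK
          exact chain_inter_compact (h𝒦K hK).2.1 (h𝒦K hK).1 c hc hcne
            (fun C hC => (hcS hC).1) (fun C hC => (hcS hC).2.2 K hK)
      · exact hUc
    rcases hzorn with ⟨m, hmU, hm⟩
    have hmS := hm.prop
    have hmne : m.Nonempty := by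
      rcases h𝒦F.1 with ⟨K, hK⟩
      exact (hmS.2.2 K hK).mono Set.inter_subset_right
    have hRud : RudinSet m := by
      refine ⟨hmS.1, hmne, 𝒦, h𝒦K, h𝒦F, hmS.2.2, ?_⟩
      intro B hBc hBm hBmeet
      exact hm.eq_of_le ⟨hBc, hBm.trans hmS.2.1, hBmeet⟩ hBm
    rcases h2 m hRud with ⟨x, hx⟩
    have hxm : x ∈ m := hx ▸ subset_closure rfl
    have hxI : x ∈ ⋂₀ 𝒦 := by
      intro K hK
      rcases hmS.2.2 K hK with ⟨k, hkK, hkm⟩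
      rw [hx] at hkm
      exact sat_upper (h𝒦K hK).2.2 hkK hkm
    exact hmS.2.1 hxm (hIU hxI)
  tfae_finish
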